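/- arXiv:1007.0926 — 4 statements merged into one kernel-verified Lean document; each statement's English description precedes it below -/
import Mathlib

section
/- Let w(x) = Σ_{n=1}^∞ exp(-π n² x). For real b with 0 < b < π/2 (so cos b > 0), the identity 1 + 2w(e^{-ib}) = e^{ib/2}·(1 + 2w(e^{ib})) holds. -/
open Complex Real

noncomputable def w (x : ℂ) : ℂ :=
  ∑' n : ℕ, Complex.exp (-(π : ℂ) * ((n : ℂ) + 1) ^ 2 * x)

lemma jacobiTheta_I_mul (x : ℂ) (hx : 0 < (I * x).im) :
    jacobiTheta (I * x) = 1 + 2 * w x := by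
  rw [jacobiTheta_eq_tsum_nat hx, w]
  norm_num
  congr 1
  funext n
  congr 1
  linear_combination ((π : ℂ) * ((n : ℂ) + 1) ^ 2 * x) * Complex.I_mul_I

theorem stmt8 (b : ℝ) (hb0 : 0 < b) (hb : b < π / 2) :
    1 + 2 * w (Complex.exp (-(I * b))) =
      Complex.exp (I * b / 2) * (1 + 2 * w (Complex.exp (I * b))) := by
  have hcos : 0 < Real.cos b := Real.cos_pos_of_mem_Ioo
    ⟨by linarith [Real.pi_pos], hb⟩
  have him : 0 < (I * Complex.exp (I * b)).im := by
    rw [mul_comm I (b : ℂ)]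
    simpa [Complex.exp_ofReal_mul_I_re] using hcos
  set τ : UpperHalfPlane := ⟨I * Complex.exp (I * b), him⟩ with hτ
  have hS := jacobiTheta_S_smul τ
  have hcoe : ((ModularGroup.S • τ : UpperHalfPlane) : ℂ) = I * Complex.exp (-(I * b)) := by
    rw [UpperHalfPlane.modular_S_smul, UpperHalfPlane.coe_mk]
    show (-(I * Complex.exp (I * b)))⁻¹ = I * Complex.exp (-(I * b))
    rw [Complex.exp_neg, inv_neg, mul_inv, Complex.inv_I]
    ring
  have him' : 0 < (I * Complex.exp (-(I * b))).im := by
    rw [← hcoe]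
    exact (ModularGroup.S • τ).2
  have hpow : (-I * (τ : ℂ)) ^ (1 / 2 : ℂ) = Complex.exp (I * b / 2) := by
    have h1 : -I * (τ : ℂ) = Complex.exp (I * b) := by
      show -I * (I * Complex.exp (I * b)) = _
      linear_combination (-(Complex.exp (I*b))) * Complex.I_mul_I
    rw [h1, Complex.cpow_def_of_ne_zero (Complex.exp_ne_zero _),
      Complex.log_exp (by simp; linarith [Real.pi_pos])
        (by simp; linarith [Real.pi_gt_three])]
    ring_nf
  rw [hcoe, jacobiTheta_I_mul _ him'] at hS
  have hτc : jacobiTheta (τ : ℂ) = 1 + 2 * w (Complex.exp (I * b)) :=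
    jacobiTheta_I_mul _ him
  rw [hτc, hpow] at hS
  exact hS
end

section
/- Let w(x) = Σ_{n=1}^∞ exp(-π n² x) for Re(x) > 0. Then the function b ↦ 1 + 2w(e^{ib}), together with all its derivatives with respect to b, tends to 0 as b → π/2⁻. -/
open Complex Real Filter

namespace Stmt11Aux

open Metric Nat

/-- The theta constant: sum of norms of theta terms at a reference point. -/
noncomputable def Cθ : ℝ := ∑' n : ℤ, ‖jacobiTheta₂_term n (-(I/2)) I‖

lemma term_sq_sub_nonneg (n : ℤ) : (0:ℝ) ≤ (n:ℝ)^2 - n := by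
  rcases le_or_gt n 0 with h | h
  · have : (n:ℝ) ≤ 0 := by exact_mod_cast h
    nlinarith [sq_nonneg (n:ℝ)]
  · have : (1:ℝ) ≤ (n:ℝ) := by exact_mod_cast h
    nlinarith

lemma Cθ_summable : Summable fun n : ℤ => ‖jacobiTheta₂_term n (-(I/2)) I‖ :=
  summable_norm_iff.mpr ((summable_jacobiTheta₂_term_iff _ _).mpr (by simp))

lemma Cθ_nonneg : 0 ≤ Cθ := tsum_nonneg fun n => norm_nonneg _

/-- Key bound for `jacobiTheta₂ 2⁻¹ σ` from the functional equation. -/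
lemma theta2_bound {σ : ℂ} (h1 : 0 < σ.im) (h2 : σ.im ≤ 1) (hT : 1 ≤ (-1/σ).im) :
    ‖jacobiTheta₂ (2⁻¹ : ℂ) σ‖ ≤ σ.im⁻¹ * rexp (-(π/4) * (-1/σ).im) * Cθ := by
  have hσ0 : σ ≠ 0 := fun h => by simp [h] at h1
  rw [jacobiTheta₂_functional_equation]
  have hT0 : (0:ℝ) < (-1/σ).im := lt_of_lt_of_le one_pos hT
  have ha : ‖1 / (-I * σ) ^ (1/2 : ℂ)‖ ≤ σ.im⁻¹ := by
    have h12 : ((1/2 : ℂ)) = ((1/2 : ℝ) : ℂ) := by norm_num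
    rw [norm_div, norm_one, h12, norm_cpow_real]
    have habs : ‖-I * σ‖ = ‖σ‖ := by
      simp [map_mul]
    rw [habs]
    have h3 : σ.im ≤ ‖σ‖ := le_trans (le_abs_self _) (Complex.abs_im_le_norm σ)
    have h4 : σ.im ^ (1/2 : ℝ) ≤ ‖σ‖ ^ (1/2 : ℝ) :=
      Real.rpow_le_rpow h1.le h3 (by norm_num)
    have h5 : σ.im ≤ σ.im ^ (1/2 : ℝ) := by
      nth_rewrite 1 [← Real.rpow_one σ.im]
      exact Real.rpow_le_rpow_of_exponent_ge h1 h2 (by norm_num)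
    rw [div_eq_inv_mul, mul_one]
    exact inv_anti₀ h1 (le_trans h5 h4)
  have hb : ‖cexp (-↑π * I * (2⁻¹:ℂ) ^ 2 / σ)‖ = rexp (-(π/4) * (-1/σ).im) := by
    rw [Complex.norm_exp]
    congr 1
    have h4 : ((2⁻¹:ℂ)) ^ 2 = (4⁻¹ : ℂ) := by norm_num
    have : -↑π * I * (2⁻¹:ℂ) ^ 2 / σ = ((π/4 : ℝ) : ℂ) * (I * (-1/σ)) := by
      rw [h4]; push_cast
      rw [div_eq_mul_inv, div_eq_mul_inv, div_eq_mul_inv]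
      ring
    rw [this]
    simp [Complex.mul_re, Complex.mul_im]
  have hz : (2⁻¹ : ℂ) / σ = -((-1/σ)/2) := by field_simp
  have hc : ‖jacobiTheta₂ ((2⁻¹:ℂ) / σ) (-1/σ)‖ ≤ Cθ := by
    rw [hz]
    have hsum : Summable fun n : ℤ => ‖jacobiTheta₂_term n (-((-1/σ)/2)) (-1/σ)‖ :=
      summable_norm_iff.mpr ((summable_jacobiTheta₂_term_iff _ _).mpr hT0)
    refine le_trans (norm_tsum_le_tsum_norm hsum) (hsum.tsum_le_tsum ?_ Cθ_summable)
    intro n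
    rw [norm_jacobiTheta₂_term, norm_jacobiTheta₂_term]
    have him : (-((-1/σ)/2)).im = -((-1/σ).im/2) := by simp
    have himI : (-(I/2)).im = -(1/2 : ℝ) := by simp
    rw [him, himI, Complex.I_im, Real.exp_le_exp]
    have hnn := term_sq_sub_nonneg n
    nlinarith [mul_le_mul_of_nonneg_left hT hnn, Real.pi_pos]
  calc ‖1 / (-I * σ) ^ (1/2 : ℂ) * cexp (-↑π * I * (2⁻¹:ℂ) ^ 2 / σ) *
        jacobiTheta₂ ((2⁻¹:ℂ) / σ) (-1 / σ)‖
      = ‖1 / (-I * σ) ^ (1/2 : ℂ)‖ * ‖cexp (-↑π * I * (2⁻¹:ℂ) ^ 2 / σ)‖ *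
        ‖jacobiTheta₂ ((2⁻¹:ℂ) / σ) (-1 / σ)‖ := by rw [norm_mul, norm_mul]
    _ ≤ σ.im⁻¹ * rexp (-(π/4) * (-1/σ).im) * Cθ := by
        rw [hb]
        refine mul_le_mul (mul_le_mul_of_nonneg_right ha (Real.exp_nonneg _)) hc
          (norm_nonneg _) ?_
        positivity

/-- Cauchy estimate for iterated derivatives. -/
lemma cauchy_est {f : ℂ → ℂ} {c : ℂ} {r M : ℝ} (hr : 0 < r)
    (hd : DifferentiableOn ℂ f (closedBall c r))
    (hM : ∀ z ∈ closedBall c r, ‖f z‖ ≤ M) (n : ℕ) :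
    ‖iteratedDeriv n f c‖ ≤ n ! * M * r⁻¹ ^ n := by
  lift r to NNReal using hr.le with r'
  have hr' : 0 < r' := by exact_mod_cast hr
  have hp := hd.hasFPowerSeriesOnBall hr'
  have key := (hp.factorial_smul (1 : ℂ) n).symm
  rw [iteratedDeriv_eq_iteratedFDeriv, key, nsmul_eq_mul, norm_mul]
  have h1 : ‖(n ! : ℂ)‖ = (n ! : ℝ) := by rw [Complex.norm_natCast]
  rw [h1, mul_assoc]
  refine mul_le_mul_of_nonneg_left ?_ (by positivity)
  have h2 : ‖cauchyPowerSeries f c r' n fun _ => (1:ℂ)‖ ≤ ‖cauchyPowerSeries f c r' n‖ := by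
    refine le_trans (ContinuousMultilinearMap.le_opNorm _ _) ?_
    simp
  refine le_trans h2 (le_trans (norm_cauchyPowerSeries_le f c r' n) ?_)
  have habs : |(r' : ℝ)| = (r' : ℝ) := abs_of_pos hr
  rw [habs]
  refine mul_le_mul_of_nonneg_right ?_ (by positivity)
  have hcont : Continuous fun θ : ℝ => ‖f (circleMap c r' θ)‖ := by
    refine (hd.continuousOn.comp_continuous (continuous_circleMap c r') ?_).norm
    intro θ
    exact sphere_subset_closedBall (circleMap_mem_sphere c hr.le θ)
  have hint : (∫ θ : ℝ in (0)..2 * π, ‖f (circleMap c r' θ)‖) ≤ 2 * π * M := by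
    have := intervalIntegral.integral_mono_on (by positivity : (0:ℝ) ≤ 2 * π)
      (hcont.intervalIntegrable 0 (2*π))
      (intervalIntegrable_const (c := M) (μ := MeasureTheory.volume))
      (fun θ _ => hM _ (sphere_subset_closedBall (circleMap_mem_sphere c hr.le θ)))
    simpa using this
  calc (2 * π)⁻¹ * ∫ θ : ℝ in (0)..2 * π, ‖f (circleMap c r' θ)‖
      ≤ (2 * π)⁻¹ * (2 * π * M) := mul_le_mul_of_nonneg_left hint (by positivity)
    _ = M := by field_simp

/-- Transfer of iterated derivatives from ℂ to ℝ for analytic functions. -/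
lemma iteratedDeriv_comp_ofReal {U : Set ℂ} (hU : IsOpen U) :
    ∀ (n : ℕ) {f : ℂ → ℂ}, AnalyticOnNhd ℂ f U → ∀ {x : ℝ}, (x : ℂ) ∈ U →
    iteratedDeriv n (fun t : ℝ => f t) x = iteratedDeriv n f x := by
  intro n
  induction n with
  | zero => intro f hf x hx; simp
  | succ n ih =>
    intro f hf x hx
    rw [iteratedDeriv_succ', iteratedDeriv_succ']
    have hUo : IsOpen {t : ℝ | (t : ℂ) ∈ U} := hU.preimage Complex.continuous_ofReal
    have hev : (fun t : ℝ => deriv f t) =ᶠ[nhds x] deriv (fun t : ℝ => f t) := by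
      filter_upwards [hUo.mem_nhds hx] with t ht
      exact (((hf t ht).differentiableAt.hasDerivAt).comp_ofReal).deriv.symm
    rw [← Filter.EventuallyEq.iteratedDeriv_eq n hev]
    exact ih hf.deriv hx

/-- Theta shift identity. -/
lemma theta_shift (σ : ℂ) : jacobiTheta (σ - 1) = jacobiTheta₂ (2⁻¹ : ℂ) σ := by
  rw [jacobiTheta, jacobiTheta₂]
  refine tsum_congr fun n => ?_
  rw [jacobiTheta₂_term, Complex.exp_eq_exp_iff_exists_int]
  refine ⟨-(n * (n + 1) / 2), ?_⟩
  have h2' : (n * (n + 1) / 2) * 2 = n * (n + 1) :=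
    Int.ediv_mul_cancel (Int.even_mul_succ_self n).two_dvd
  have h2 : ((n * (n + 1) / 2 : ℤ) : ℂ) * 2 = ((n : ℂ) * ((n : ℂ) + 1)) := by
    exact_mod_cast congrArg (Int.cast : ℤ → ℂ) h2'
  push_cast
  linear_combination (π : ℂ) * Complex.I * h2

/-- The main identity on the reals. -/
lemma eq_F {x : ℝ} (hx : 0 < Real.cos x) :
    1 + 2 * w (cexp (I * x)) = jacobiTheta₂ (2⁻¹ : ℂ) (1 + I * cexp (I * x)) := by
  have him : (I * cexp (I * x)).im = Real.cos x := by
    simp [Complex.mul_im, Complex.exp_re, Complex.mul_re]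
  have h1 : jacobiTheta (I * cexp (I * x)) = 1 + 2 * w (cexp (I * x)) := by
    rw [jacobiTheta_eq_tsum_nat (by rw [him]; exact hx), w]
    congr 1
    congr 1
    refine tsum_congr fun n => ?_
    congr 1
    linear_combination (π : ℂ) * ((n : ℂ) + 1) ^ 2 * cexp (I * x) * Complex.I_sq
  rw [← h1, ← theta_shift]
  congr 1
  ring

/-- Geometric estimates on the Cauchy disc. -/
lemma geom {b δ : ℝ} (hδ : δ = π / 2 - b) (h1 : 0 < δ) (h2 : δ ≤ 1 / 72) {z : ℂ}
    (hz : z ∈ closedBall (b : ℂ) (δ / 2)) :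
    δ / 8 ≤ (cexp (I * z)).re ∧ ‖1 + I * cexp (I * z)‖ ≤ 3 * δ := by
  have hzb : ‖z - b‖ ≤ δ / 2 := by
    rwa [mem_closedBall, Complex.dist_eq] at hz
  have hre : |z.re - b| ≤ δ / 2 := by
    have h := (Complex.abs_re_le_norm (z - b)).trans hzb
    simpa using h
  have him : |z.im| ≤ δ / 2 := by
    have h := (Complex.abs_im_le_norm (z - b)).trans hzb
    simpa using h
  obtain ⟨hre1, hre2⟩ := abs_le.mp hre
  obtain ⟨him1, him2⟩ := abs_le.mp him
  constructor
  · have hre' : (cexp (I * z)).re = Real.exp (-z.im) * Real.cos z.re := by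
      rw [Complex.exp_re]
      congr 2 <;> simp [Complex.mul_re, Complex.mul_im]
    rw [hre']
    obtain ⟨t, ht⟩ : ∃ t : ℝ, t = π / 2 - z.re := ⟨_, rfl⟩
    have ht1 : δ / 2 ≤ t := by rw [ht]; linarith
    have ht2 : t ≤ 3 * δ / 2 := by rw [ht]; linarith
    have ht3 : t ≤ 1 := by linarith
    have ht0 : 0 < t := by linarith
    have hcos : Real.cos z.re = Real.sin t := by rw [ht, Real.sin_pi_div_two_sub]
    have hsin : δ / 4 ≤ Real.sin t := by
      have hgt := Real.sin_gt_sub_cube ht0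
      have hsq : t^2 ≤ t := by nlinarith [mul_nonneg ht0.le (sub_nonneg.mpr ht3)]
      have hcube : t^3 ≤ t^2 := by
        nlinarith [mul_nonneg (mul_nonneg ht0.le ht0.le) (sub_nonneg.mpr ht3)]
      linarith
    have hexp : (1:ℝ) / 2 ≤ Real.exp (-z.im) := by
      have h3 : -(δ/2) ≤ -z.im := by linarith
      have h4 := Real.add_one_le_exp (-z.im)
      linarith
    rw [hcos]
    calc δ / 8 = (1/2) * (δ/4) := by ring
      _ ≤ Real.exp (-z.im) * Real.sin t :=
        mul_le_mul hexp hsin (by linarith) (le_trans (by norm_num) hexp)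
  · have key : 1 + I * cexp (I * z) = -(cexp (I * (z - ((π/2 : ℝ) : ℂ))) - 1) := by
      have h4 : I * cexp (I * z) = -cexp (I * (z - ((π/2 : ℝ) : ℂ))) := by
        have hI : cexp (((π/2 : ℝ) : ℂ) * I) = I := by
          rw [Complex.exp_mul_I, ← Complex.ofReal_cos, ← Complex.ofReal_sin,
            Real.cos_pi_div_two, Real.sin_pi_div_two]
          simp
        rw [show I * (z - ((π/2 : ℝ) : ℂ)) = I * z + (-(((π/2 : ℝ) : ℂ) * I)) by ring,
          Complex.exp_add, Complex.exp_neg, hI]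
        field_simp [Complex.I_ne_zero]
        ring_nf
        simp [Complex.I_sq]
      rw [h4]; ring
    rw [key, norm_neg]
    have hu : ‖I * (z - ((π/2 : ℝ) : ℂ))‖ ≤ 3 * δ / 2 := by
      rw [norm_mul, Complex.norm_I, one_mul]
      have e1 : z - ((π/2 : ℝ) : ℂ) = (z - b) + (((b : ℝ) : ℂ) - ((π/2 : ℝ) : ℂ)) := by ring
      have e2 : ‖((b : ℝ) : ℂ) - ((π/2 : ℝ) : ℂ)‖ = δ := by
        rw [← Complex.ofReal_sub, Complex.norm_real, Real.norm_eq_abs, abs_sub_comm, hδ]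
        exact abs_of_pos (hδ ▸ h1)
      calc ‖z - ((π/2 : ℝ) : ℂ)‖ ≤
            ‖z - b‖ + ‖((b : ℝ) : ℂ) - ((π/2 : ℝ) : ℂ)‖ := by
              rw [e1]; exact norm_add_le _ _
        _ ≤ δ / 2 + δ := by rw [e2]; linarith
        _ = 3 * δ / 2 := by ring
    calc ‖cexp (I * (z - ((π/2 : ℝ) : ℂ))) - 1‖
        ≤ 2 * ‖I * (z - ((π/2 : ℝ) : ℂ))‖ :=
          Complex.norm_exp_sub_one_le (by linarith)
      _ ≤ 3 * δ := by linarith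

/-- Decay bound for `F` on the disc. -/
lemma F_bound {b δ : ℝ} (hδ : δ = π / 2 - b) (h1 : 0 < δ) (h2 : δ ≤ 1 / 72) {z : ℂ}
    (hz : z ∈ closedBall (b : ℂ) (δ / 2)) :
    ‖jacobiTheta₂ (2⁻¹ : ℂ) (1 + I * cexp (I * z))‖ ≤
      8 * δ⁻¹ * rexp (-(π/288) * δ⁻¹) * Cθ := by
  obtain ⟨hg1, hg2⟩ := geom hδ h1 h2 hz
  set σ := 1 + I * cexp (I * z) with hσ
  have hσim : σ.im = (cexp (I * z)).re := by
    simp [hσ, Complex.add_im, Complex.mul_im]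
  have h01 : 0 < σ.im := by rw [hσim]; linarith
  have habsσ : ‖σ‖ ≤ 3 * δ := hg2
  have h02 : σ.im ≤ 1 := by
    have := le_trans (le_abs_self σ.im) (Complex.abs_im_le_norm σ)
    linarith
  have hσ0 : σ ≠ 0 := fun h => by simp [h] at h01
  have hTform : (-1/σ).im = σ.im / Complex.normSq σ := by
    rw [neg_div, Complex.neg_im, one_div, Complex.inv_im]
    ring
  have hnsq0 : 0 < Complex.normSq σ := Complex.normSq_pos.mpr hσ0
  have hnormSq : Complex.normSq σ ≤ 9 * δ^2 := by
    rw [← Complex.sq_norm]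
    nlinarith [norm_nonneg σ]
  have hT1 : 1/(72*δ) ≤ (-1/σ).im := by
    rw [hTform]
    have step1 : (δ/8) / (9 * δ^2) ≤ σ.im / Complex.normSq σ := by
      rw [hσim] at *
      exact div_le_div₀ (by linarith) (by linarith) hnsq0 hnormSq
    have step2 : (δ/8) / (9 * δ^2) = 1/(72*δ) := by
      field_simp
      ring
    linarith [step2 ▸ step1]
  have hT : 1 ≤ (-1/σ).im := by
    refine le_trans ?_ hT1
    rw [le_div_iff₀ (by linarith)]
    linarith
  refine le_trans (theta2_bound h01 h02 hT) ?_
  have e1 : σ.im⁻¹ ≤ 8 * δ⁻¹ := by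
    rw [show (8: ℝ) * δ⁻¹ = (δ/8)⁻¹ by field_simp]
    exact inv_anti₀ (by linarith) (by rw [hσim]; linarith)
  have e2 : rexp (-(π/4) * (-1/σ).im) ≤ rexp (-(π/288) * δ⁻¹) := by
    rw [Real.exp_le_exp]
    have hiden : (π/4) * (1/(72*δ)) = (π/288) * δ⁻¹ := by
      rw [one_div, mul_inv, ← mul_assoc]
      congr 1
      rw [div_mul_eq_mul_div, div_eq_div_iff (by norm_num) (by norm_num)]
      ring
    nlinarith [mul_le_mul_of_nonneg_left hT1 (by positivity : (0:ℝ) ≤ π/4), Real.pi_pos]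
  refine mul_le_mul (mul_le_mul e1 e2 (Real.exp_nonneg _) (by positivity)) le_rfl Cθ_nonneg ?_
  positivity

end Stmt11Aux

open Stmt11Aux Metric Nat

theorem stmt11 (p : ℕ) :
    Tendsto (iteratedDeriv p (fun b : ℝ => 1 + 2 * w (Complex.exp (I * b))))
      (nhdsWithin (π / 2) (Set.Iio (π / 2))) (nhds 0) := by
  set U : Set ℂ := {z : ℂ | 0 < (cexp (I * z)).re} with hU
  have hUo : IsOpen U :=
    isOpen_lt continuous_const
      (Complex.continuous_re.comp (Complex.continuous_exp.comp (continuous_const.mul continuous_id)))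
  have hFan : AnalyticOnNhd ℂ (fun z => jacobiTheta₂ (2⁻¹ : ℂ) (1 + I * cexp (I * z))) U := by
    refine DifferentiableOn.analyticOnNhd
      (fun z hz => DifferentiableAt.differentiableWithinAt ?_) hUo
    have hin : DifferentiableAt ℂ (fun z : ℂ => 1 + I * cexp (I * z)) z :=
      (((differentiableAt_id.const_mul I).cexp).const_mul I).const_add 1
    have hτ : 0 < (1 + I * cexp (I * z)).im := by
      have hz' : 0 < (cexp (I * z)).re := hz
      simpa [Complex.add_im, Complex.mul_im] using hz'
    exact (differentiableAt_jacobiTheta₂_snd 2⁻¹ hτ).comp z hin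
  have key : ∀ᶠ b in nhdsWithin (π/2) (Set.Iio (π/2)),
      ‖iteratedDeriv p (fun b : ℝ => 1 + 2 * w (Complex.exp (I * b))) b‖ ≤
        (p ! : ℝ) * (8 * (π/2 - b)⁻¹ * rexp (-(π/288) * (π/2 - b)⁻¹) * Cθ) *
          (2 * (π/2 - b)⁻¹) ^ p := by
    filter_upwards [Ioo_mem_nhdsLT_of_mem
      (Set.mem_Ioc.mpr ⟨by linarith [Real.pi_pos], le_refl (π/2)⟩ :
        π/2 ∈ Set.Ioc (π/2 - 1/72) (π/2))] with b hb
    obtain ⟨hb1, hb2⟩ := hb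
    have h1 : 0 < π/2 - b := by linarith
    have h2 : π/2 - b ≤ 1/72 := by linarith
    have hbpos : 0 < b := by nlinarith [Real.pi_gt_three]
    have hcosb : 0 < Real.cos b :=
      Real.cos_pos_of_mem_Ioo ⟨by nlinarith [Real.pi_gt_three], hb2⟩
    have hev : (fun b : ℝ => 1 + 2 * w (Complex.exp (I * b))) =ᶠ[nhds b]
        (fun t : ℝ => jacobiTheta₂ (2⁻¹ : ℂ) (1 + I * cexp (I * (t : ℂ)))) := by
      have hopen : IsOpen {t : ℝ | 0 < Real.cos t} :=
        isOpen_lt continuous_const Real.continuous_cos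
      filter_upwards [hopen.mem_nhds hcosb] with t ht
      exact eq_F ht
    rw [hev.iteratedDeriv_eq p]
    have hbU : ((b : ℝ) : ℂ) ∈ U := by
      show 0 < (cexp (I * (b : ℂ))).re
      have he : (cexp (I * (b : ℂ))).re = Real.exp (-(b:ℂ).im) * Real.cos (b:ℂ).re := by
        rw [Complex.exp_re]
        congr 2 <;> simp [Complex.mul_re, Complex.mul_im]
      rw [he]
      simp only [Complex.ofReal_im, Complex.ofReal_re, neg_zero, Real.exp_zero, one_mul]
      exact hcosb
    rw [iteratedDeriv_comp_ofReal hUo p hFan hbU]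
    have hball : closedBall ((b : ℝ) : ℂ) ((π/2 - b)/2) ⊆ U := fun z hz =>
      lt_of_lt_of_le (by positivity) (geom rfl h1 h2 hz).1
    have hd : DifferentiableOn ℂ (fun z => jacobiTheta₂ (2⁻¹ : ℂ) (1 + I * cexp (I * z)))
        (closedBall ((b : ℝ) : ℂ) ((π/2 - b)/2)) := fun z hz =>
      ((hFan z (hball hz)).differentiableAt.differentiableWithinAt)
    have hM : ∀ z ∈ closedBall ((b : ℝ) : ℂ) ((π/2 - b)/2),
        ‖jacobiTheta₂ (2⁻¹ : ℂ) (1 + I * cexp (I * z))‖ ≤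
          8 * (π/2 - b)⁻¹ * rexp (-(π/288) * (π/2 - b)⁻¹) * Cθ := fun z hz =>
      F_bound rfl h1 h2 hz
    have hcau := cauchy_est (by positivity : (0:ℝ) < (π/2 - b)/2) hd hM p
    have hrw : ((π/2 - b)/2)⁻¹ = 2 * (π/2 - b)⁻¹ := by
      rw [div_eq_mul_inv, mul_inv, mul_comm]
      norm_num
    rwa [hrw] at hcau
  refine squeeze_zero_norm' key ?_
  have hψ : Tendsto (fun b : ℝ => (π/2 - b)⁻¹) (nhdsWithin (π/2) (Set.Iio (π/2))) atTop := by
    refine tendsto_inv_nhdsGT_zero.comp ?_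
    refine tendsto_nhdsWithin_of_tendsto_nhds_of_eventually_within _ ?_ ?_
    · have hc0 : Continuous fun b : ℝ => π/2 - b := by continuity
      have hc : Tendsto (fun b : ℝ => π/2 - b) (nhds (π/2)) (nhds 0) := by
        have := hc0.tendsto (π/2 : ℝ)
        simpa using this
      exact hc.mono_left nhdsWithin_le_nhds
    · filter_upwards [self_mem_nhdsWithin] with x hx
      simp only [Set.mem_Iio] at hx
      simpa using sub_pos.mpr hx
  have hφ : Tendsto (fun t : ℝ => (p ! : ℝ) * (8 * t * rexp (-(π/288) * t) * Cθ) * (2 * t) ^ p)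
      atTop (nhds 0) := by
    have hbase := tendsto_rpow_mul_exp_neg_mul_atTop_nhds_zero ((p : ℝ) + 1) (π/288)
      (by positivity)
    have hconst : Tendsto
        (fun t : ℝ => ((p ! : ℝ) * 8 * Cθ * 2 ^ p) * (t ^ ((p : ℝ) + 1) * rexp (-(π/288) * t)))
        atTop (nhds 0) := by
      simpa using hbase.const_mul ((p ! : ℝ) * 8 * Cθ * 2 ^ p)
    refine hconst.congr' ?_
    filter_upwards [eventually_ge_atTop (0:ℝ)] with t ht
    rw [show ((p : ℝ) + 1) = ((p + 1 : ℕ) : ℝ) by push_cast; ring, Real.rpow_natCast]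
    rw [mul_pow]
    ring
  exact hφ.comp hψ
end

section
/- Fejér's sign-change theorem: Let f : [0, c] → ℝ be continuous (c may be +∞, with f integrable against all powers t^n). If the sequence of moments ∫_0^c f(t) t^n dt, n = 0, 1, 2, ..., has at least N changes of sign, then f has at least N changes of sign (hence at least N zeroes) in (0, c). -/
open Real

private lemma mono_adj (g : ℕ → ℝ) (L : ℕ) (h : ∀ i < L, g i < g (i+1)) :
    ∀ b, b ≤ L → ∀ a, a < b → g a < g b := by
  intro b
  induction b with
  | zero => intro _ a ha; omega
  | succ b ih =>
    intro hbL a ha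
    rcases Nat.lt_or_ge a b with h'|h'
    · exact (ih (by omega) a h').trans (h b (by omega))
    · obtain rfl : a = b := by omega
      exact h a (by omega)

private lemma neg_run (a : ℕ → ℝ) (y : ℝ) (hy : 0 < y) (p : ℕ) (hp : a p < 0) :
    ∀ q, p ≤ q → (∀ m, p ≤ m → m < q → a (m+1) ≤ y * a m) → a q < 0 := by
  intro q hq
  induction q, hq using Nat.le_induction with
  | base => intro _; exact hp
  | succ q hpq ih =>
    intro h
    have h1 : a q < 0 := ih (fun m h1 h2 => h m h1 (by omega))
    have h2 : a (q+1) ≤ y * a q := h q hpq (by omega)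
    nlinarith

private lemma alt1 (a : ℕ → ℝ) (y : ℝ) (hy : 0 < y) (p q : ℕ) (hpq : p < q)
    (h : a p * a q < 0) :
    ∃ m, p ≤ m ∧ m < q ∧ 0 < (a (m+1) - y * a m) * a q := by
  by_contra hcon
  push_neg at hcon
  rcases lt_trichotomy (a q) 0 with hq | hq | hq
  · -- a q < 0, so a p > 0; run on -a
    have hp : 0 < a p := by nlinarith
    have key : ∀ m, p ≤ m → m < q → (fun m => -a m) (m+1) ≤ y * (fun m => -a m) m := by
      intro m h1 h2
      have h3 := hcon m h1 h2
      simp only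
      nlinarith
    have := neg_run (fun m => -a m) y hy p (by simpa using hp) q hpq.le key
    linarith
  · rw [hq] at h; simp at h
  · -- a q > 0, so a p < 0
    have hp : a p < 0 := by nlinarith
    have key : ∀ m, p ≤ m → m < q → a (m+1) ≤ y * a m := by
      intro m h1 h2
      have h3 := hcon m h1 h2
      nlinarith
    have := neg_run a y hy p hp q hpq.le key
    linarith

private def Alt (a : ℕ → ℝ) (M : ℕ) : Prop :=
  ∃ n : ℕ → ℕ, (∀ i < M, n i < n (i+1)) ∧ (∀ i < M, a (n i) * a (n (i+1)) < 0)

private lemma altStep {a : ℕ → ℝ} {y : ℝ} (hy : 0 < y) {M : ℕ}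
    (h : Alt a (M+1)) : Alt (fun m => a (m+1) - y * a m) M := by
  obtain ⟨n, hmono, hprod⟩ := h
  have key : ∀ i, ∃ m, i < M+1 →
      n i ≤ m ∧ m < n (i+1) ∧ 0 < (a (m+1) - y * a m) * a (n (i+1)) := by
    intro i
    by_cases hi : i < M+1
    · obtain ⟨m, hm⟩ := alt1 a y hy (n i) (n (i+1)) (hmono i hi) (hprod i hi)
      exact ⟨m, fun _ => hm⟩
    · exact ⟨0, fun h => absurd h hi⟩
  choose g hg using key
  refine ⟨g, ?_, ?_⟩
  · intro i hi
    obtain ⟨u1, u2, -⟩ := hg i (by omega)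
    obtain ⟨v1, v2, -⟩ := hg (i+1) (by omega)
    omega
  · intro i hi
    obtain ⟨-, -, h1⟩ := hg i (by omega)
    obtain ⟨-, -, h2⟩ := hg (i+1) (by omega)
    have h3 := hprod (i+1) (by omega)
    show 0 > (a (g i + 1) - y * a (g i)) * (a (g (i+1) + 1) - y * a (g (i+1)))
    nlinarith

private lemma prod_sign (g : ℕ → ℝ) : ∀ (k i : ℕ), i ≤ k → (∀ j < i, 0 < g j) →
    (∀ j, i ≤ j → j < k → g j < 0) →
    0 < (-1:ℝ)^(k - i) * ∏ j ∈ Finset.range k, g j := by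
  intro k
  induction k with
  | zero => intro i hi _ _; interval_cases i; simp
  | succ k ih =>
    intro i hi hpos hneg
    rcases Nat.lt_or_ge k i with h'|h'
    · have : i = k+1 := by omega
      subst this
      simp only [Nat.sub_self, pow_zero, one_mul]
      exact Finset.prod_pos (fun j hj => hpos j (Finset.mem_range.mp hj))
    · have h1 := ih i h' hpos (fun j hj1 hj2 => hneg j hj1 (by omega))
      have h2 : g k < 0 := hneg k h' (by omega)
      rw [Finset.prod_range_succ]
      have h3 : k + 1 - i = (k - i) + 1 := by omega
      rw [h3, pow_succ]
      nlinarith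

private def NChain (c : ℝ) (f : ℝ → ℝ) (L : ℕ) : Prop :=
  ∃ x : ℕ → ℝ, (∀ i < L, x i < x (i+1)) ∧ (∀ i ≤ L, x i ∈ Set.Ioo 0 c) ∧
    (∀ i < L, f (x i) * f (x (i+1)) < 0)

private lemma nchain_anti {c : ℝ} {f : ℝ → ℝ} {L L' : ℕ} (h : L' ≤ L) :
    NChain c f L → NChain c f L' := by
  rintro ⟨x, h1, h2, h3⟩
  exact ⟨x, fun i hi => h1 i (by omega), fun i hi => h2 i (by omega),
    fun i hi => h3 i (by omega)⟩

set_option maxHeartbeats 2000000 in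
theorem stmt12 (c : ℝ) (hc : 0 < c) (f : ℝ → ℝ)
    (hf : ContinuousOn f (Set.Icc 0 c)) (N : ℕ)
    (moments : ∃ n : Fin (N + 1) → ℕ, StrictMono n ∧
      ∀ j : Fin N, (∫ t in (0 : ℝ)..c, f t * t ^ (n j.castSucc)) *
        (∫ t in (0 : ℝ)..c, f t * t ^ (n j.succ)) < 0) :
    ∃ x : Fin (N + 1) → ℝ, StrictMono x ∧ (∀ j, x j ∈ Set.Ioo 0 c) ∧
      ∀ j : Fin N, f (x j.castSucc) * f (x j.succ) < 0 := by
  classical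
  by_contra hcon
  obtain ⟨n, hnmono, hnalt⟩ := moments
  -- translate moments hypothesis to ℕ-indexed Alt
  have halt : Alt (fun m => ∫ t in (0:ℝ)..c, f t * t ^ m) N := by
    refine ⟨fun i => n ⟨min i N, by omega⟩, ?_, ?_⟩
    · intro i hi
      apply hnmono
      rw [Fin.mk_lt_mk]
      omega
    · intro i hi
      have h1 : (⟨min i N, by omega⟩ : Fin (N+1)) = (⟨i, hi⟩ : Fin N).castSucc := by
        simp [Fin.ext_iff]; omega
      have h2 : (⟨min (i+1) N, by omega⟩ : Fin (N+1)) = (⟨i, hi⟩ : Fin N).succ := by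
        simp [Fin.ext_iff]; omega
      simp only
      rw [h1, h2]
      exact hnalt ⟨i, hi⟩
  -- no N-change chain
  have hNot : ¬ NChain c f N := by
    rintro ⟨x, h1, h2, h3⟩
    apply hcon
    refine ⟨fun i => x i, ?_, ?_, ?_⟩
    · intro a b hab
      exact mono_adj x N h1 b (Nat.lt_succ_iff.mp b.isLt) a (Fin.lt_def.mp hab)
    · intro j; exact h2 j (Nat.lt_succ_iff.mp j.isLt)
    · intro j
      simp only [Fin.coe_castSucc, Fin.val_succ]
      exact h3 j j.isLt
  have h0 : NChain c f 0 :=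
    ⟨fun _ => c/2, fun i hi => absurd hi (Nat.not_lt_zero i),
      fun i _ => ⟨by linarith, by linarith⟩, fun i hi => absurd hi (Nat.not_lt_zero i)⟩
  obtain ⟨k, hk, hkN, hkk⟩ : ∃ k, NChain c f k ∧ k < N ∧ ¬ NChain c f (k+1) := by
    have hk' : NChain c f (Nat.findGreatest (NChain c f) N) :=
      Nat.findGreatest_spec (Nat.zero_le N) h0
    have hle : Nat.findGreatest (NChain c f) N ≤ N := Nat.findGreatest_le N
    have hlt : Nat.findGreatest (NChain c f) N < N := by
      rcases Nat.eq_or_lt_of_le hle with h|h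
      · exact absurd (h ▸ hk') hNot
      · exact h
    exact ⟨_, hk', hlt, Nat.findGreatest_is_greatest (n := N) (by omega) (by omega)⟩
  obtain ⟨z, hzadj, hzIoo, hzalt⟩ := hk
  have hzmono : ∀ b ≤ k, ∀ a < b, z a < z b := mono_adj z k hzadj
  have hfzne : ∀ i ≤ k, 1 ≤ k → f (z i) ≠ 0 := by
    intro i hik hk1 h0'
    rcases Nat.lt_or_ge i k with h|h
    · have := hzalt i h
      rw [h0'] at this
      simp at this
    · have hik' : i = k := by omega
      have := hzalt (k-1) (by omega)
      rw [show k - 1 + 1 = k by omega, ← hik', h0'] at this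
      simp at this
  -- the separating points
  obtain ⟨Y, hY0, hYtop, hYmid⟩ : ∃ Y : ℕ → ℝ, Y 0 = 0 ∧ (∀ i, k < i → Y i = c) ∧
      (∀ i, 1 ≤ i → i ≤ k →
        Y i = sSup {t | t ∈ Set.Icc (z (i-1)) (z i) ∧ 0 < f t * f (z (i-1))}) := by
    refine ⟨fun i => if i = 0 then 0 else if k < i then c
      else sSup {t | t ∈ Set.Icc (z (i-1)) (z i) ∧ 0 < f t * f (z (i-1))}, rfl, ?_, ?_⟩
    · intro i hi; simp only; rw [if_neg (by omega), if_pos hi]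
    · intro i h1 h2; simp only; rw [if_neg (by omega), if_neg (by omega)]
  have hSne : ∀ i, 1 ≤ i → i ≤ k →
      z (i-1) ∈ {t | t ∈ Set.Icc (z (i-1)) (z i) ∧ 0 < f t * f (z (i-1))} := by
    intro i h1 h2
    exact ⟨⟨le_rfl, (hzmono i h2 (i-1) (by omega)).le⟩,
      mul_self_pos.mpr (hfzne (i-1) (by omega) (by omega))⟩
  have hSbdd : ∀ i, 1 ≤ i → i ≤ k →
      BddAbove {t | t ∈ Set.Icc (z (i-1)) (z i) ∧ 0 < f t * f (z (i-1))} :=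
    fun i _ _ => ⟨z i, fun t ht => ht.1.2⟩
  have hYlb : ∀ i, 1 ≤ i → i ≤ k → z (i-1) ≤ Y i := by
    intro i h1 h2
    rw [hYmid i h1 h2]
    exact le_csSup (hSbdd i h1 h2) (hSne i h1 h2)
  have hYub : ∀ i, 1 ≤ i → i ≤ k → Y i < z i := by
    intro i h1 h2
    have hb : z i ∈ Set.Icc (0:ℝ) c := Set.Ioo_subset_Icc_self (hzIoo i h2)
    have hgb : f (z i) * f (z (i-1)) < 0 := by
      have h3 := hzalt (i-1) (by omega)
      rw [show i - 1 + 1 = i by omega] at h3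
      nlinarith
    have hcw : ContinuousWithinAt (fun t => f t * f (z (i-1))) (Set.Icc 0 c) (z i) :=
      (hf.mul continuousOn_const) (z i) hb
    rw [Metric.continuousWithinAt_iff] at hcw
    obtain ⟨δ, hδ, hδ2⟩ := hcw (-(f (z i) * f (z (i-1)))) (by linarith)
    have hzz : z (i-1) < z i := hzmono i h2 (i-1) (by omega)
    rw [hYmid i h1 h2]
    have hsle : sSup {t | t ∈ Set.Icc (z (i-1)) (z i) ∧ 0 < f t * f (z (i-1))} ≤
        max (z (i-1)) (z i - δ) := by
      apply csSup_le ⟨z (i-1), hSne i h1 h2⟩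
      intro t ht
      obtain ⟨⟨ht1, ht2⟩, ht3⟩ := ht
      by_contra hcc
      push_neg at hcc
      have htb : t ∈ Set.Icc (0:ℝ) c := by
        constructor
        · have := (hzIoo (i-1) (by omega)).1; linarith
        · have := (hzIoo i h2).2; linarith
      have hd : dist t (z i) < δ := by
        rw [Real.dist_eq, abs_lt]
        constructor
        · have := lt_of_le_of_lt (le_max_right (z (i-1)) (z i - δ)) hcc
          linarith
        · linarith
      have h4 := hδ2 htb hd
      rw [Real.dist_eq] at h4
      have h5 := (abs_lt.mp h4).2
      linarith
    calc sSup {t | t ∈ Set.Icc (z (i-1)) (z i) ∧ 0 < f t * f (z (i-1))}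
        ≤ max (z (i-1)) (z i - δ) := hsle
      _ < z i := max_lt (by linarith) (by linarith)
  have hYnot : ∀ i, 1 ≤ i → i ≤ k → ∀ t, Y i < t →
      t ∈ Set.Icc (z (i-1)) (z i) → f t * f (z (i-1)) ≤ 0 := by
    intro i h1 h2 t ht hticc
    by_contra hcc
    push_neg at hcc
    have : t ≤ Y i := by
      rw [hYmid i h1 h2]
      exact le_csSup (hSbdd i h1 h2) ⟨hticc, hcc⟩
    linarith
  have hYex : ∀ i, 1 ≤ i → i ≤ k → ∀ u, u < Y i →
      ∃ t', (t' ∈ Set.Icc (z (i-1)) (z i) ∧ 0 < f t' * f (z (i-1))) ∧ u < t' := by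
    intro i h1 h2 u hu
    rw [hYmid i h1 h2] at hu
    exact exists_lt_of_lt_csSup ⟨z (i-1), hSne i h1 h2⟩ hu
  have hB : ∀ i ≤ k, ∀ t, t ∈ Set.Ioo 0 c → Y i < t → t < Y (i+1) → 0 ≤ f t * f (z i) := by
    intro i hik t ht hA1 hA2
    by_contra hneg
    push_neg at hneg
    rcases lt_trichotomy t (z i) with hlt | heq | hgt
    · rcases Nat.eq_zero_or_pos i with rfl | hi1
      · -- prepend t before z 0
        apply hkk
        refine ⟨fun j => if j = 0 then t else z (j-1), ?_, ?_, ?_⟩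
        · intro j hj
          simp only
          rcases Nat.eq_zero_or_pos j with rfl | hj1
          · rw [if_pos rfl, if_neg (by omega)]
            exact hlt
          · rw [if_neg (by omega), if_neg (by omega)]
            rw [show j + 1 - 1 = (j-1) + 1 by omega]
            exact hzadj (j-1) (by omega)
        · intro j hj
          simp only
          rcases Nat.eq_zero_or_pos j with rfl | hj1
          · rw [if_pos rfl]; exact ht
          · rw [if_neg (by omega)]; exact hzIoo (j-1) (by omega)
        · intro j hj
          simp only
          rcases Nat.eq_zero_or_pos j with rfl | hj1
          · rw [if_pos rfl, if_neg (by omega)]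
            exact hneg
          · rw [if_neg (by omega), if_neg (by omega)]
            rw [show j + 1 - 1 = (j-1) + 1 by omega]
            exact hzalt (j-1) (by omega)
      · -- i ≥ 1 : t would be in S i beyond its sup
        have h1 := hYnot i hi1 hik t hA1 ⟨by have := hYlb i hi1 hik; linarith, hlt.le⟩
        have h2 := hzalt (i-1) (by omega)
        rw [show i - 1 + 1 = i by omega] at h2
        nlinarith [mul_pos_of_neg_of_neg hneg h2,
          mul_nonneg (neg_nonneg.mpr h1) (sq_nonneg (f (z i)))]
    · rw [heq] at hneg
      nlinarith [mul_self_nonneg (f (z i))]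
    · rcases Nat.lt_or_ge i k with hik' | hik'
      · -- i < k : insert t and t' between z i and z (i+1)
        obtain ⟨t', ⟨htI, ht'3⟩, ht'4⟩ := hYex (i+1) (by omega) (by omega) t hA2
        simp only [Nat.add_sub_cancel] at htI ht'3
        obtain ⟨ht'1, ht'2⟩ := htI
        have ht'5 : t' < z (i+1) := by
          rcases lt_or_eq_of_le ht'2 with h|h
          · exact h
          · exfalso; have h6 := hzalt i hik'; rw [h] at ht'3; nlinarith
        apply hkk
        apply nchain_anti (show k+1 ≤ k+2 by omega)
        refine ⟨fun j => if j ≤ i then z j else if j = i+1 then t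
          else if j = i+2 then t' else z (j-2), ?_, ?_, ?_⟩
        · intro j hj
          simp only
          rcases Nat.lt_or_ge j i with h1 | h1
          · rw [if_pos h1.le, if_pos (by omega)]
            exact hzadj j (by omega)
          rcases Nat.eq_or_lt_of_le h1 with h1' | h1'
          · rw [if_pos (by omega), if_neg (by omega), if_pos (by omega)]
            rw [← h1']
            exact hgt
          rcases Nat.eq_or_lt_of_le h1' with h2' | h2'
          · rw [if_neg (by omega), if_pos (by omega), if_neg (by omega),
              if_neg (by omega), if_pos (by omega)]
            exact ht'4
          rcases Nat.eq_or_lt_of_le h2' with h3' | h3'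
          · rw [if_neg (by omega), if_neg (by omega), if_pos (by omega),
              if_neg (by omega), if_neg (by omega), if_neg (by omega)]
            rw [show j + 1 - 2 = i + 1 by omega]
            exact ht'5
          · rw [if_neg (by omega), if_neg (by omega), if_neg (by omega),
              if_neg (by omega), if_neg (by omega), if_neg (by omega)]
            rw [show j + 1 - 2 = (j-2) + 1 by omega]
            exact hzadj (j-2) (by omega)
        · intro j hj
          simp only
          rcases le_or_gt j i with h1 | h1
          · rw [if_pos h1]; exact hzIoo j (by omega)
          rcases Nat.eq_or_lt_of_le h1 with h1' | h1'
          · rw [if_neg (by omega), if_pos (by omega)]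
            exact ht
          rcases Nat.eq_or_lt_of_le h1' with h2' | h2'
          · rw [if_neg (by omega), if_neg (by omega), if_pos (by omega)]
            constructor
            · have := (hzIoo i (by omega)).1; linarith
            · have := (hzIoo (i+1) (by omega)).2; linarith
          · rw [if_neg (by omega), if_neg (by omega), if_neg (by omega)]
            exact hzIoo (j-2) (by omega)
        · intro j hj
          simp only
          rcases Nat.lt_or_ge j i with h1 | h1
          · rw [if_pos h1.le, if_pos (by omega)]
            exact hzalt j (by omega)
          rcases Nat.eq_or_lt_of_le h1 with h1' | h1'
          · rw [if_pos (by omega), if_neg (by omega), if_pos (by omega)]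
            rw [← h1']
            rw [mul_comm]
            exact hneg
          rcases Nat.eq_or_lt_of_le h1' with h2' | h2'
          · rw [if_neg (by omega), if_pos (by omega), if_neg (by omega),
              if_neg (by omega), if_pos (by omega)]
            nlinarith [sq_nonneg (f (z i))]
          rcases Nat.eq_or_lt_of_le h2' with h3' | h3'
          · rw [if_neg (by omega), if_neg (by omega), if_pos (by omega),
              if_neg (by omega), if_neg (by omega), if_neg (by omega)]
            rw [show j + 1 - 2 = i + 1 by omega]
            have h6 := hzalt i hik'
            nlinarith [sq_nonneg (f (z i))]
          · rw [if_neg (by omega), if_neg (by omega), if_neg (by omega),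
              if_neg (by omega), if_neg (by omega), if_neg (by omega)]
            rw [show j + 1 - 2 = (j-2) + 1 by omega]
            exact hzalt (j-2) (by omega)
      · -- i = k : append t after z k
        have hik2 : i = k := by omega
        rw [hik2] at hneg hgt
        apply hkk
        refine ⟨fun j => if j ≤ k then z j else t, ?_, ?_, ?_⟩
        · intro j hj
          simp only
          rcases Nat.lt_or_ge j k with h1|h1
          · rw [if_pos h1.le, if_pos (by omega)]; exact hzadj j h1
          · obtain rfl : j = k := by omega
            rw [if_pos le_rfl, if_neg (by omega)]
            exact hgt
        · intro j hj
          simp only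
          rcases le_or_gt j k with h1|h1
          · rw [if_pos h1]; exact hzIoo j h1
          · rw [if_neg (by omega)]; exact ht
        · intro j hj
          simp only
          rcases Nat.lt_or_ge j k with h1|h1
          · rw [if_pos h1.le, if_pos (by omega)]; exact hzalt j h1
          · obtain rfl : j = k := by omega
            rw [if_pos le_rfl, if_neg (by omega), mul_comm]
            exact hneg
  have hYpos : ∀ j, 1 ≤ j → j ≤ k → 0 < Y j := by
    intro j h1 h2
    have ha := hYlb j h1 h2
    have hb := (hzIoo (j-1) (by omega)).1
    linarith
  have hSpos : ∃ σ : ℝ, (σ = 1 ∨ σ = -1) ∧ ∀ t, t ∈ Set.Ioo 0 c →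
      0 ≤ σ * (f t * ∏ j ∈ Finset.range k, (t - Y (j+1))) := by
    rcases Nat.eq_zero_or_pos k with hk0 | hk1
    · by_cases hp : ∀ t ∈ Set.Ioo (0:ℝ) c, 0 ≤ f t
      · refine ⟨1, Or.inl rfl, ?_⟩
        intro t ht
        rw [hk0]
        simp only [Finset.range_zero, Finset.prod_empty, mul_one, one_mul]
        exact hp t ht
      · push_neg at hp
        obtain ⟨t0, ht0, ht0'⟩ := hp
        refine ⟨-1, Or.inr rfl, ?_⟩
        intro t ht
        rw [hk0]
        simp only [Finset.range_zero, Finset.prod_empty, mul_one]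
        by_contra hcc
        push_neg at hcc
        have htpos : 0 < f t := by nlinarith
        have hprod : f t0 * f t < 0 := mul_neg_of_neg_of_pos ht0' htpos
        apply hkk
        have hne : t0 ≠ t := fun h => by rw [h] at ht0'; linarith
        rcases lt_or_gt_of_ne hne with h|h
        · refine ⟨fun j => if j = 0 then t0 else t, ?_, ?_, ?_⟩
          · intro j hj
            simp only
            obtain rfl : j = 0 := by omega
            rw [if_pos rfl, if_neg (by omega)]
            exact h
          · intro j hj
            simp only
            have hj' : j = 0 ∨ j = 1 := by omega
            rcases hj' with rfl|rfl
            · rw [if_pos rfl]; exact ht0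
            · rw [if_neg (by omega)]; exact ht
          · intro j hj
            simp only
            obtain rfl : j = 0 := by omega
            rw [if_pos rfl, if_neg (by omega)]
            exact hprod
        · refine ⟨fun j => if j = 0 then t else t0, ?_, ?_, ?_⟩
          · intro j hj
            simp only
            obtain rfl : j = 0 := by omega
            rw [if_pos rfl, if_neg (by omega)]
            exact h
          · intro j hj
            simp only
            have hj' : j = 0 ∨ j = 1 := by omega
            rcases hj' with rfl|rfl
            · rw [if_pos rfl]; exact ht
            · rw [if_neg (by omega)]; exact ht0
          · intro j hj
            simp only
            obtain rfl : j = 0 := by omega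
            rw [if_pos rfl, if_neg (by omega), mul_comm]
            exact hprod
    · -- k ≥ 1
      have hz0 : f (z 0) ≠ 0 := hfzne 0 (by omega) hk1
      obtain ⟨ε, hε1, hε0⟩ : ∃ ε : ℝ, (ε = 1 ∨ ε = -1) ∧ 0 < ε * f (z 0) := by
        rcases lt_or_gt_of_ne hz0 with h|h
        · exact ⟨-1, Or.inr rfl, by nlinarith⟩
        · exact ⟨1, Or.inl rfl, by nlinarith⟩
      have hsz : ∀ i ≤ k, 0 < ε * (-1:ℝ)^i * f (z i) := by
        intro i
        induction i with
        | zero => intro _; simpa using hε0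
        | succ i ih =>
          intro hik
          have h1 := ih (by omega)
          have h2 := hzalt i (by omega)
          rw [pow_succ]
          rcases neg_one_pow_eq_or ℝ i with h'|h' <;> rcases hε1 with he|he <;>
            rw [h', he] at h1 ⊢ <;> nlinarith
      have hYadj : ∀ j ≤ k, Y j < Y (j+1) := by
        intro j hj
        rcases Nat.eq_zero_or_pos j with rfl|hj1
        · rw [hY0]
          have h2 := hYlb 1 le_rfl hk1
          have h3 : z (1-1) = z 0 := rfl
          rw [h3] at h2
          have h4 := (hzIoo 0 (by omega)).1
          linarith
        · have h1 := hYub j hj1 hj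
          rcases Nat.eq_or_lt_of_le hj with h|h
          · rw [hYtop (j+1) (by omega)]
            have := (hzIoo j hj).2
            linarith
          · have h2 := hYlb (j+1) (by omega) (by omega)
            have h3 : z (j+1-1) = z j := by rw [Nat.add_sub_cancel]
            rw [h3] at h2
            linarith
      have hYmono := mono_adj Y (k+1) (fun j hj => hYadj j (by omega))
      refine ⟨ε * (-1)^k, ?_, ?_⟩
      · rcases hε1 with h|h <;> rcases neg_one_pow_eq_or ℝ k with h'|h' <;>
          rw [h, h'] <;> norm_num
      · intro t ht
        by_cases hroot : ∃ j, 1 ≤ j ∧ j ≤ k ∧ t = Y j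
        · obtain ⟨j, hj1, hj2, rfl⟩ := hroot
          have hzero : ∏ jj ∈ Finset.range k, (Y j - Y (jj+1)) = 0 := by
            apply Finset.prod_eq_zero (Finset.mem_range.mpr (show j - 1 < k by omega))
            rw [show j - 1 + 1 = j by omega]
            ring
          rw [hzero]
          simp
        · push_neg at hroot
          have hP0 : Y 0 < t := by rw [hY0]; exact ht.1
          obtain ⟨i, hik, hi_spec, hlt2⟩ : ∃ i, i ≤ k ∧ Y i < t ∧ t < Y (i+1) := by
            have hspec : Y (Nat.findGreatest (fun m => Y m < t) (k+1)) < t :=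
              Nat.findGreatest_spec (P := fun m => Y m < t) (n := k+1) (Nat.zero_le _) hP0
            have hle : Nat.findGreatest (fun m => Y m < t) (k+1) ≤ k+1 :=
              Nat.findGreatest_le _
            have hikk : Nat.findGreatest (fun m => Y m < t) (k+1) ≤ k := by
              rcases Nat.eq_or_lt_of_le hle with h|h
              · exfalso; rw [h, hYtop (k+1) (by omega)] at hspec; linarith [ht.2]
              · omega
            have hnext : ¬ Y (Nat.findGreatest (fun m => Y m < t) (k+1) + 1) < t :=
              Nat.findGreatest_is_greatest (P := fun m => Y m < t) (n := k+1)
                (k := Nat.findGreatest (fun m => Y m < t) (k+1) + 1) (by omega) (by omega)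
            refine ⟨_, hikk, hspec, ?_⟩
            rcases lt_or_eq_of_le (not_lt.mp hnext) with h|h
            · exact h
            · exfalso
              rcases Nat.lt_or_ge (Nat.findGreatest (fun m => Y m < t) (k+1)) k with hh|hh
              · exact hroot _ (by omega) (by omega) h
              · have h2 : Nat.findGreatest (fun m => Y m < t) (k+1) = k := by omega
                rw [h2, hYtop (k+1) (by omega)] at h
                linarith [ht.2]
          have hq : 0 < (-1:ℝ)^(k - i) * ∏ j ∈ Finset.range k, (t - Y (j+1)) := by
            apply prod_sign _ k i hik
            · intro j hj
              have h1 : Y (j+1) ≤ Y i := by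
                rcases Nat.eq_or_lt_of_le (show j+1 ≤ i by omega) with h|h
                · exact le_of_eq (congrArg Y h)
                · exact (hYmono i (by omega) (j+1) h).le
              linarith
            · intro j hj1 hj2
              have h1 : Y (i+1) ≤ Y (j+1) := by
                rcases Nat.eq_or_lt_of_le (show i+1 ≤ j+1 by omega) with h|h
                · exact le_of_eq (congrArg Y h)
                · exact (hYmono (j+1) (by omega) (i+1) h).le
              linarith
          have hfreg := hB i hik t ht hi_spec hlt2
          have hzi := hsz i hik
          have hft : 0 ≤ ε * (-1:ℝ)^i * f t := by
            rcases hε1 with h|h <;> rcases neg_one_pow_eq_or ℝ i with h'|h' <;>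
              rw [h, h'] at hzi ⊢ <;> nlinarith
          have hsplit : (-1:ℝ)^k = (-1)^i * (-1)^(k-i) := by
            rw [← pow_add]
            congr 1
            omega
          rw [hsplit]
          linarith [mul_nonneg hft hq.le]
  obtain ⟨σ, hσ, hσpos⟩ := hSpos
  have hintg : ∀ (m j : ℕ), IntervalIntegrable
      (fun t => f t * t^m * ∏ i ∈ Finset.range j, (t - Y (i+1)))
      MeasureTheory.volume 0 c := by
    intro m j
    apply ContinuousOn.intervalIntegrable
    rw [Set.uIcc_of_le hc.le]
    exact (hf.mul ((continuous_pow m).continuousOn)).mul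
      (Continuous.continuousOn
        (continuous_finset_prod _ (fun i _ => continuous_id.sub continuous_const)))
  have hrec : ∀ j m, (∫ t in (0:ℝ)..c, f t * t^m * ∏ i ∈ Finset.range (j+1), (t - Y (i+1)))
      = (∫ t in (0:ℝ)..c, f t * t^(m+1) * ∏ i ∈ Finset.range j, (t - Y (i+1)))
        - Y (j+1) * ∫ t in (0:ℝ)..c, f t * t^m * ∏ i ∈ Finset.range j, (t - Y (i+1)) := by
    intro j m
    rw [← intervalIntegral.integral_const_mul,
      ← intervalIntegral.integral_sub (hintg (m+1) j) ((hintg m j).const_mul _)]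
    apply intervalIntegral.integral_congr
    intro t _
    simp only
    rw [Finset.prod_range_succ]
    ring
  have hiter : ∀ j, j ≤ k →
      Alt (fun m => ∫ t in (0:ℝ)..c, f t * t^m * ∏ i ∈ Finset.range j, (t - Y (i+1)))
        (N - j) := by
    intro j
    induction j with
    | zero =>
      intro _
      simp only [Nat.sub_zero, Finset.range_zero, Finset.prod_empty, mul_one]
      exact halt
    | succ j ih =>
      intro hjk
      have h1 := ih (by omega)
      have h2 : N - j = (N - (j+1)) + 1 := by omega
      rw [h2] at h1
      have h3 : (0:ℝ) < Y (j+1) := hYpos (j+1) (by omega) (by omega)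
      have h4 := altStep h3 h1
      have h5 : (fun m => (∫ t in (0:ℝ)..c, f t * t^(m+1) * ∏ i ∈ Finset.range j, (t - Y (i+1)))
          - Y (j+1) * ∫ t in (0:ℝ)..c, f t * t^m * ∏ i ∈ Finset.range j, (t - Y (i+1)))
          = (fun m => ∫ t in (0:ℝ)..c, f t * t^m * ∏ i ∈ Finset.range (j+1), (t - Y (i+1))) :=
        funext (fun m => (hrec j m).symm)
      rwa [h5] at h4
  have hIk : ∀ m : ℕ,
      0 ≤ σ * ∫ t in (0:ℝ)..c, f t * t^m * ∏ i ∈ Finset.range k, (t - Y (i+1)) := by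
    intro m
    rw [← intervalIntegral.integral_const_mul]
    apply intervalIntegral.integral_nonneg_of_ae_restrict hc.le
    refine (MeasureTheory.ae_restrict_iff' measurableSet_Icc).mpr ?_
    have hz2 : ∀ᵐ t ∂(MeasureTheory.volume : MeasureTheory.Measure ℝ),
        t ∉ ({0, c} : Set ℝ) :=
      MeasureTheory.measure_eq_zero_iff_ae_notMem.mp (((Set.finite_singleton c).insert (0:ℝ)).measure_zero _)
    filter_upwards [hz2] with t htz hticc
    have htIoo : t ∈ Set.Ioo 0 c := by
      simp only [Set.mem_insert_iff, Set.mem_singleton_iff, not_or] at htz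
      exact ⟨lt_of_le_of_ne hticc.1 (Ne.symm htz.1), lt_of_le_of_ne hticc.2 htz.2⟩
    have h1 := hσpos t htIoo
    have h2 : (0:ℝ) ≤ t^m := pow_nonneg htIoo.1.le m
    simp only [Pi.zero_apply]
    nlinarith [mul_nonneg h1 h2]
  obtain ⟨nn, hnn1, hnn2⟩ := hiter k le_rfl
  have hfin := hnn2 0 (by omega)
  simp only at hfin
  have hp1 := hIk (nn 0)
  have hp2 := hIk (nn 1)
  rcases hσ with h|h <;> rw [h] at hp1 hp2 <;> nlinarith
end

section
/- Let f : [0, ∞) → ℝ be continuous with ∫_0^∞ |f(t)| t^n dt < ∞ for all n ≥ 0. If the moments μ_n = ∫_0^∞ f(t) t^{2n} dt satisfy (-1)^n μ_n > 0 for all n ≥ 0 (i.e., alternate in sign), then f has infinitely many zeroes in (0, ∞). -/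
open Real MeasureTheory

set_option maxHeartbeats 1600000 in
/-- Auxiliary: if `f` is positive on `(a, ∞)`, then the even moments
eventually grow: `a² μ_n < μ_{n+1}` for large `n`. -/
lemma fejer_aux (f : ℝ → ℝ) (hf : Continuous f)
    (hint : ∀ n : ℕ, IntegrableOn (fun t => |f t| * t ^ n) (Set.Ici 0))
    (a : ℝ) (ha : 0 < a) (hpos : ∀ t, a < t → 0 < f t) :
    ∃ N : ℕ, ∀ n ≥ N,
      a ^ 2 * ∫ t in Set.Ioi (0:ℝ), f t * t ^ (2 * n) <
        ∫ t in Set.Ioi (0:ℝ), f t * t ^ (2 * (n + 1)) := by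
  have hab : a < a + 1 := by linarith
  have hb0 : (0:ℝ) < a + 1 := by linarith
  -- integrability of |f| * t^k and f * t^k on Ioi 0
  have habs : ∀ k : ℕ, IntegrableOn (fun t => |f t| * t ^ k) (Set.Ioi 0) := fun k =>
    (hint k).mono_set Set.Ioi_subset_Ici_self
  have hfi : ∀ k : ℕ, IntegrableOn (fun t => f t * t ^ k) (Set.Ioi 0) := by
    intro k
    refine ((habs k).mono' ?_ ?_)
    · exact ((hf.mul (continuous_pow k)).aestronglyMeasurable).restrict
    · refine (ae_restrict_iff' measurableSet_Ioi).2 (Filter.Eventually.of_forall ?_)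
      intro t ht
      have ht0 : (0:ℝ) ≤ t := le_of_lt ht
      rw [Real.norm_eq_abs, abs_mul, abs_pow, abs_of_nonneg ht0]
  -- |f| integrable on Ioc 0 a
  have hfabs : IntegrableOn (fun t => |f t|) (Set.Ioc 0 a) := by
    have := (hint 0).mono_set (show Set.Ioc (0:ℝ) a ⊆ Set.Ici 0 from
      fun t ht => le_of_lt ht.1)
    simpa using this
  obtain ⟨C, hC⟩ : ∃ C : ℝ, C = ∫ t in Set.Ioc (0:ℝ) a, |f t| := ⟨_, rfl⟩
  have hC0 : 0 ≤ C := hC ▸ integral_nonneg fun t => abs_nonneg _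
  -- minimum of f on [a+1, a+2]
  obtain ⟨x₀, hx₀mem, hx₀min⟩ :=
    (isCompact_Icc (a := a + 1) (b := a + 2)).exists_isMinOn
      ⟨a + 1, le_rfl, by linarith⟩ (hf.continuousOn)
  obtain ⟨m, hm⟩ : ∃ m : ℝ, m = f x₀ := ⟨_, rfl⟩
  have hm0 : 0 < m := hm ▸ hpos x₀ (lt_of_lt_of_le hab hx₀mem.1)
  obtain ⟨C', hC'⟩ : ∃ C' : ℝ, C' = C * a ^ 2 + 1 := ⟨_, rfl⟩
  have hC'0 : 0 < C' := by rw [hC']; positivity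
  obtain ⟨m', hm'⟩ : ∃ m' : ℝ, m' = m * ((a + 1) ^ 2 - a ^ 2) := ⟨_, rfl⟩
  have hba2 : a ^ 2 < (a + 1) ^ 2 := by nlinarith
  have hm'0 : 0 < m' := by rw [hm']; nlinarith
  -- choose N
  have hr1 : (1:ℝ) < (a + 1) ^ 2 / a ^ 2 := (one_lt_div (by positivity)).2 hba2
  obtain ⟨N, hN⟩ := pow_unbounded_of_one_lt (C' / m') hr1
  refine ⟨N, fun n hn => ?_⟩
  -- the key growth inequality for this n
  have hgrow : C' * (a ^ 2) ^ n < m' * ((a + 1) ^ 2) ^ n := by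
    have h1 : ((a + 1) ^ 2 / a ^ 2) ^ N ≤ ((a + 1) ^ 2 / a ^ 2) ^ n :=
      pow_le_pow_right₀ (le_of_lt hr1) hn
    have h2 : C' / m' < ((a + 1) ^ 2 / a ^ 2) ^ n := lt_of_lt_of_le hN h1
    rw [div_pow, div_lt_div_iff₀ hm'0 (by positivity)] at h2
    nlinarith [pow_pos (pow_pos ha 2) n, pow_pos (pow_pos hb0 2) n]
  -- the integrand of the difference
  have hGeq : ∀ t : ℝ, f t * t ^ (2 * n) * (t ^ 2 - a ^ 2)
      = f t * t ^ (2 * (n + 1)) - a ^ 2 * (f t * t ^ (2 * n)) := by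
    intro t
    have h : t ^ (2 * (n + 1)) = t ^ (2 * n) * t ^ 2 := by
      rw [show 2 * (n + 1) = 2 * n + 2 from by ring, pow_add]
    rw [h]; ring
  have hGint : IntegrableOn (fun t => f t * t ^ (2 * n) * (t ^ 2 - a ^ 2)) (Set.Ioi 0) := by
    have h : (fun t : ℝ => f t * t ^ (2 * n) * (t ^ 2 - a ^ 2))
        = fun t => f t * t ^ (2 * (n + 1)) - a ^ 2 * (f t * t ^ (2 * n)) := funext hGeq
    rw [h]
    exact (hfi (2 * (n + 1))).sub ((hfi (2 * n)).const_mul _)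
  -- key identity
  have key : (∫ t in Set.Ioi (0:ℝ), f t * t ^ (2 * (n + 1)))
      - a ^ 2 * ∫ t in Set.Ioi (0:ℝ), f t * t ^ (2 * n)
      = ∫ t in Set.Ioi (0:ℝ), f t * t ^ (2 * n) * (t ^ 2 - a ^ 2) := by
    rw [← integral_const_mul, ← integral_sub (hfi _) ((hfi _).const_mul _)]
    exact integral_congr_ae (Filter.Eventually.of_forall fun t => (hGeq t).symm)
  -- split the integral
  have hsplit : (∫ t in Set.Ioi (0:ℝ), f t * t ^ (2 * n) * (t ^ 2 - a ^ 2))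
      = (∫ t in Set.Ioc (0:ℝ) a, f t * t ^ (2 * n) * (t ^ 2 - a ^ 2))
        + ∫ t in Set.Ioi a, f t * t ^ (2 * n) * (t ^ 2 - a ^ 2) := by
    rw [← setIntegral_union (Set.Ioc_disjoint_Ioi le_rfl) measurableSet_Ioi
      (hGint.mono_set Set.Ioc_subset_Ioi_self) (hGint.mono_set (Set.Ioi_subset_Ioi ha.le)),
      Set.Ioc_union_Ioi_eq_Ioi ha.le]
  -- lower bound on Ioc 0 a
  have hbound1 : -(C' * (a ^ 2) ^ n)
      ≤ ∫ t in Set.Ioc (0:ℝ) a, f t * t ^ (2 * n) * (t ^ 2 - a ^ 2) := by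
    have hle : ∀ t ∈ Set.Ioc (0:ℝ) a,
        (-(a ^ 2 * (a ^ 2) ^ n)) * |f t| ≤ f t * t ^ (2 * n) * (t ^ 2 - a ^ 2) := by
      intro t ht
      have ht0 : 0 < t := ht.1
      have hta : t ≤ a := ht.2
      have h2 : t ^ (2 * n) ≤ (a ^ 2) ^ n := by
        rw [pow_mul]
        exact pow_le_pow_left₀ (by positivity) (by nlinarith) n
      have h2' : 0 ≤ t ^ (2 * n) := by positivity
      have h3 : 0 ≤ a ^ 2 - t ^ 2 := by nlinarith
      have h4 : a ^ 2 - t ^ 2 ≤ a ^ 2 := by nlinarith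
      have h5 : |f t * t ^ (2 * n) * (t ^ 2 - a ^ 2)| ≤ a ^ 2 * (a ^ 2) ^ n * |f t| := by
        rw [abs_mul, abs_mul, abs_sub_comm, abs_of_nonneg h3,
          abs_of_nonneg h2']
        calc |f t| * t ^ (2 * n) * (a ^ 2 - t ^ 2)
            ≤ |f t| * (a ^ 2) ^ n * a ^ 2 := by
              apply mul_le_mul (mul_le_mul_of_nonneg_left h2 (abs_nonneg _)) h4 h3
              positivity
          _ = a ^ 2 * (a ^ 2) ^ n * |f t| := by ring
      have h6 := neg_abs_le (f t * t ^ (2 * n) * (t ^ 2 - a ^ 2))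
      linarith
    have hint1 : IntegrableOn (fun t => (-(a ^ 2 * (a ^ 2) ^ n)) * |f t|)
        (Set.Ioc (0:ℝ) a) := hfabs.const_mul _
    have hmono := setIntegral_mono_on hint1 (hGint.mono_set Set.Ioc_subset_Ioi_self)
      measurableSet_Ioc hle
    rw [integral_const_mul, ← hC] at hmono
    have : -(C' * (a ^ 2) ^ n) ≤ -(a ^ 2 * (a ^ 2) ^ n) * C := by
      rw [hC']
      nlinarith [pow_pos (pow_pos ha 2) n]
    linarith
  -- lower bound on Ioi a
  have hbound2 : m' * ((a + 1) ^ 2) ^ n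
      ≤ ∫ t in Set.Ioi a, f t * t ^ (2 * n) * (t ^ 2 - a ^ 2) := by
    have hGnn : ∀ t ∈ Set.Ioi a, 0 ≤ f t * t ^ (2 * n) * (t ^ 2 - a ^ 2) := by
      intro t ht
      have ht' : a < t := ht
      have hft : 0 < f t := hpos t ht'
      have ht0 : 0 < t := lt_trans ha ht'
      have hta : (0:ℝ) ≤ t ^ 2 - a ^ 2 := by nlinarith
      positivity
    have hsub : (∫ t in Set.Icc (a+1) (a+2), f t * t ^ (2 * n) * (t ^ 2 - a ^ 2))
        ≤ ∫ t in Set.Ioi a, f t * t ^ (2 * n) * (t ^ 2 - a ^ 2) := by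
      apply setIntegral_mono_set (hGint.mono_set (Set.Ioi_subset_Ioi ha.le))
      · exact (ae_restrict_iff' measurableSet_Ioi).2 (Filter.Eventually.of_forall hGnn)
      · exact Filter.Eventually.of_forall fun t ht => lt_of_lt_of_le hab ht.1
    have hconst : ∀ t ∈ Set.Icc (a+1) (a+2),
        m' * ((a + 1) ^ 2) ^ n ≤ f t * t ^ (2 * n) * (t ^ 2 - a ^ 2) := by
      intro t ht
      have htb : a + 1 ≤ t := ht.1
      have hta : a < t := lt_of_lt_of_le hab htb
      have ht0 : 0 < t := lt_trans ha hta
      have hft : m ≤ f t := hm ▸ hx₀min ht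
      have hfpos : 0 < f t := hpos t hta
      have h2 : ((a + 1) ^ 2) ^ n ≤ t ^ (2 * n) := by
        rw [pow_mul]
        exact pow_le_pow_left₀ (by positivity) (by nlinarith) n
      have h3 : (a + 1) ^ 2 - a ^ 2 ≤ t ^ 2 - a ^ 2 := by nlinarith
      rw [hm']
      calc m * ((a + 1) ^ 2 - a ^ 2) * ((a + 1) ^ 2) ^ n
          ≤ f t * (t ^ 2 - a ^ 2) * t ^ (2 * n) := by
            apply mul_le_mul (mul_le_mul hft h3 (by nlinarith) hfpos.le) h2
              (by positivity) (by nlinarith)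
        _ = f t * t ^ (2 * n) * (t ^ 2 - a ^ 2) := by ring
    have hconstint : IntegrableOn (fun _ : ℝ => m' * ((a + 1) ^ 2) ^ n)
        (Set.Icc (a+1) (a+2)) :=
      integrableOn_const (by rw [Real.volume_Icc]; exact ENNReal.ofReal_ne_top)
    have hGIcc : IntegrableOn (fun t => f t * t ^ (2 * n) * (t ^ 2 - a ^ 2))
        (Set.Icc (a+1) (a+2)) := by
      apply hGint.mono_set
      intro t ht
      have := ht.1
      simp only [Set.mem_Ioi]
      linarith
    have hmono := setIntegral_mono_on hconstint hGIcc measurableSet_Icc hconst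
    rw [setIntegral_const] at hmono
    have hvol : (volume (Set.Icc (a+1) (a+2))).toReal = 1 := by
      rw [Real.volume_Icc]
      norm_num
    rw [measureReal_def, hvol, one_smul] at hmono
    exact le_trans hmono hsub
  -- combine
  have hfinal : 0 < (∫ t in Set.Ioi (0:ℝ), f t * t ^ (2 * (n + 1)))
      - a ^ 2 * ∫ t in Set.Ioi (0:ℝ), f t * t ^ (2 * n) := by
    rw [key, hsplit]
    linarith
  linarith

theorem stmt13 (f : ℝ → ℝ) (hf : Continuous f)
    (hint : ∀ n : ℕ, IntegrableOn (fun t => |f t| * t ^ n) (Set.Ici 0))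
    (halt : ∀ n : ℕ, 0 < (-1 : ℝ) ^ n * ∫ t in Set.Ioi (0 : ℝ), f t * t ^ (2 * n)) :
    {t : ℝ | 0 < t ∧ f t = 0}.Infinite := by
  by_contra hfin
  rw [Set.not_infinite] at hfin
  -- get an upper bound on the zero set
  obtain ⟨a₀, ha₀⟩ := hfin.bddAbove
  obtain ⟨a, haa⟩ : ∃ a : ℝ, a = max a₀ 1 := ⟨_, rfl⟩
  have ha : 0 < a := haa ▸ lt_of_lt_of_le one_pos (le_max_right _ _)
  have hnz : ∀ t, a < t → f t ≠ 0 := by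
    intro t ht h0
    have ht0 : 0 < t := lt_trans ha ht
    have h1 : t ≤ a₀ := ha₀ ⟨ht0, h0⟩
    have h2 : t ≤ a := haa ▸ le_trans h1 (le_max_left _ _)
    linarith
  -- f has constant sign on (a, ∞)
  have hsign : (∀ t, a < t → 0 < f t) ∨ (∀ t, a < t → f t < 0) := by
    by_cases hp : ∀ t, a < t → 0 < f t
    · exact Or.inl hp
    · push_neg at hp
      obtain ⟨u, hu, hfu⟩ := hp
      have hfu' : f u < 0 := lt_of_le_of_ne hfu (hnz u hu)
      refine Or.inr fun t ht => ?_
      by_contra hft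
      push_neg at hft
      have hft' : 0 < f t := lt_of_le_of_ne hft (Ne.symm (hnz t ht))
      have h0mem : (0:ℝ) ∈ Set.uIcc (f t) (f u) := by
        rw [Set.mem_uIcc]
        exact Or.inr ⟨hfu'.le, hft'.le⟩
      obtain ⟨z, hz, hfz⟩ := intermediate_value_uIcc (hf.continuousOn) h0mem
      have hza : a < z := by
        rcases Set.mem_uIcc.1 hz with h | h
        · exact lt_of_lt_of_le ht h.1
        · exact lt_of_lt_of_le hu h.1
      exact hnz z hza hfz
  rcases hsign with hpos | hneg
  · -- f positive eventually: use even n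
    obtain ⟨N, hN⟩ := fejer_aux f hf hint a ha hpos
    have h1 := hN (2 * N) (by omega)
    have h2 := halt (2 * N)
    have h3 := halt (2 * N + 1)
    rw [pow_mul] at h2
    simp only [neg_one_sq, one_pow, one_mul] at h2
    have h3' : (-1:ℝ) ^ (2 * N + 1) = -1 := by
      rw [pow_succ, pow_mul]; simp
    rw [h3', neg_one_mul, neg_pos] at h3
    have hsq : 0 < a ^ 2 := by positivity
    nlinarith
  · -- f negative eventually: apply aux to -f, use odd n
    have hint' : ∀ n : ℕ, IntegrableOn (fun t => |(-f) t| * t ^ n) (Set.Ici 0) := by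
      intro n; simpa using hint n
    obtain ⟨N, hN⟩ := fejer_aux (-f) (hf.neg) hint' a ha
      (fun t ht => by simpa using hneg t ht)
    have h1 := hN (2 * N + 1) (by omega)
    have h2 := halt (2 * N + 1)
    have h3 := halt (2 * N + 2)
    have hodd : (-1:ℝ) ^ (2 * N + 1) = -1 := by
      rw [pow_succ, pow_mul]; simp
    have heven : (-1:ℝ) ^ (2 * N + 2) = 1 := by
      rw [show 2 * N + 2 = 2 * (N + 1) by ring, pow_mul]; simp
    rw [hodd, neg_one_mul, neg_pos] at h2
    rw [heven, one_mul] at h3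
    have e1 : (∫ t in Set.Ioi (0:ℝ), (-f) t * t ^ (2 * (2 * N + 1)))
        = -∫ t in Set.Ioi (0:ℝ), f t * t ^ (2 * (2 * N + 1)) := by
      rw [← integral_neg]
      congr 1; ext t; simp [neg_mul]
    have e2 : (∫ t in Set.Ioi (0:ℝ), (-f) t * t ^ (2 * (2 * N + 1 + 1)))
        = -∫ t in Set.Ioi (0:ℝ), f t * t ^ (2 * (2 * N + 1 + 1)) := by
      rw [← integral_neg]
      congr 1; ext t; simp [neg_mul]
    rw [e1, e2] at h1
    have h3'' : (0:ℝ) < ∫ t in Set.Ioi (0:ℝ), f t * t ^ (2 * (2 * N + 1 + 1)) := by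
      have : 2 * N + 2 = 2 * N + 1 + 1 := by ring
      rw [this] at h3
      exact h3
    have hsq : 0 < a ^ 2 := by positivity
    nlinarith
end
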